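/- Let S be a nonempty subset of ℝⁿ, let f : ℝⁿ → ℝ ∪ {∞} with f_* := inf_{x ∈ S} f(x) finite, and let ψ : ℝⁿ → ℝ be a residual function of S. Then the following two properties are equivalent: (i) there exist constants c_* > 0, α and β with 0 < α ≤ 1 ≤ β such that for all c > c_*, inf_{x ∈ S} f(x) = inf_{x ∈ ℝⁿ} ( f(x) + c·( ψ(x)^α + ψ(x)^β ) ); (ii) there exist constants c_* > 0, α and β with 0 < α ≤ 1 ≤ β such that c_*·( ψ(x)^α + ψ(x)^β ) ≥ [f_* − f(x)]_+ for all x ∈ ℝⁿ. Moreover, when (ii) holds with constants c_*, α, β, then for every c > c_* one has { x ∈ S : f(x) = f_* } = { x ∈ ℝⁿ : f(x) + c·( ψ(x)^α + ψ(x)^β ) = inf_{x' ∈ ℝⁿ} ( f(x') + c·( ψ(x')^α + ψ(x')^β ) ) }. -/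

import Mathlib

open Real

private lemma key1 {X : Type*} (S : Set X)
    (f : X → EReal) (hf : ∀ x, f x ≠ ⊥) (fstar : ℝ) (hfstar : (fstar : EReal) = ⨅ x ∈ S, f x)
    (r : X → ℝ) (hr0 : ∀ x, 0 ≤ r x) (hrS : ∀ x ∈ S, r x = 0) (cstar : ℝ)
    (hbound : ∀ x, max ((fstar : EReal) - f x) 0 ≤ ((cstar * r x : ℝ) : EReal))
    (c : ℝ) (hc : cstar ≤ c) :
    (⨅ x ∈ S, f x) = ⨅ x, f x + ((c * r x : ℝ) : EReal) := by
  refine le_antisymm ?_ (le_iInf₂ fun x hx => (iInf_le _ x).trans_eq (by simp [hrS x hx]))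
  rw [← hfstar]
  refine le_iInf fun x => ?_
  rcases eq_or_ne (f x) ⊤ with h | h
  · rw [h, EReal.top_add_coe]; exact le_top
  have hb := (le_max_left ((fstar : EReal) - f x) 0).trans (hbound x)
  lift f x to ℝ using ⟨h, hf x⟩ with a ha
  rw [← EReal.coe_sub, EReal.coe_le_coe_iff] at hb
  have h2 : cstar * r x ≤ c * r x := mul_le_mul_of_nonneg_right hc (hr0 x)
  rw [← EReal.coe_add, EReal.coe_le_coe_iff]
  linarith

private lemma key2 {X : Type*} (S : Set X)
    (f : X → EReal) (hf : ∀ x, f x ≠ ⊥) (fstar : ℝ)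
    (hfstar : (fstar : EReal) = ⨅ x ∈ S, f x)
    (r : X → ℝ) (hr0 : ∀ x, 0 ≤ r x) (hrS : ∀ x ∈ S, r x = 0)
    (hrz : ∀ x, r x = 0 → x ∈ S) (cstar : ℝ)
    (hbound : ∀ x, max ((fstar : EReal) - f x) 0 ≤ ((cstar * r x : ℝ) : EReal))
    (c : ℝ) (hc : cstar < c) :
    {x | x ∈ S ∧ f x = (fstar : EReal)} =
      {x | f x + ((c * r x : ℝ) : EReal) = ⨅ x', f x' + ((c * r x' : ℝ) : EReal)} := by
  have hinf : (⨅ x', f x' + ((c * r x' : ℝ) : EReal)) = (fstar : EReal) :=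
    ((key1 S f hf fstar hfstar r hr0 hrS cstar hbound c hc.le).symm.trans hfstar.symm)
  ext x
  simp only [Set.mem_setOf_eq, hinf]
  constructor
  · rintro ⟨hxS, hxf⟩
    simp [hxf, hrS x hxS]
  · intro hx
    rcases eq_or_ne (f x) ⊤ with h | h
    · rw [h, EReal.top_add_coe] at hx
      exact absurd hx.symm (EReal.coe_ne_top fstar)
    have hb := (le_max_left ((fstar : EReal) - f x) 0).trans (hbound x)
    lift f x to ℝ using ⟨h, hf x⟩ with a ha
    rw [← EReal.coe_add, EReal.coe_eq_coe_iff] at hx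
    rw [← EReal.coe_sub, EReal.coe_le_coe_iff] at hb
    have hr : r x = 0 := by nlinarith [hr0 x]
    refine ⟨hrz x hr, ?_⟩
    rw [hr] at hx
    norm_num at hx
    exact_mod_cast hx

private lemma key3 (cstar a fstar r : ℝ) (hr : 0 ≤ r)
    (h : ∀ c, cstar < c → fstar ≤ a + c * r) : fstar - a ≤ cstar * r := by
  by_contra hcon
  push_neg at hcon
  rcases hr.eq_or_lt with h0 | h0
  · have := h (cstar + 1) (by linarith)
    nlinarith
  · have hlt : cstar < (fstar - a) / r := (lt_div_iff₀ h0).2 (by linarith)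
    have hc2 : cstar < (cstar + (fstar - a) / r) / 2 := by linarith
    have h1 := h _ hc2
    have h3 : (cstar + (fstar - a) / r) / 2 * r < fstar - a := by
      have h4 : (cstar + (fstar - a) / r) / 2 < (fstar - a) / r := by linarith
      calc (cstar + (fstar - a) / r) / 2 * r < (fstar - a) / r * r :=
        mul_lt_mul_of_pos_right h4 h0
      _ = fstar - a := div_mul_cancel₀ _ h0.ne'
    linarith

/-- Theorem 5.14, equivalence (i) ⇔ (ii) together with the argmin conclusion:
exactness of the two-exponent penalty `c (ψ^α + ψ^β)` for all large `c` is
equivalent to the bound `c_* (ψ(x)^α + ψ(x)^β) ≥ [f_* - f(x)]₊`; moreover,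
under the bound, the minimizers of `f` over `S` coincide with those of
`f + c (ψ^α + ψ^β)` over `ℝⁿ` for every `c > c_*`. -/
theorem stmt_14 {n : ℕ} (S : Set (EuclideanSpace ℝ (Fin n))) (hS : S.Nonempty)
    (f : EuclideanSpace ℝ (Fin n) → EReal) (hf : ∀ x, f x ≠ ⊥)
    (fstar : ℝ) (hfstar : (fstar : EReal) = ⨅ x ∈ S, f x)
    (ψ : EuclideanSpace ℝ (Fin n) → ℝ)
    (hψ0 : ∀ x, 0 ≤ ψ x) (hψS : ∀ x, ψ x = 0 ↔ x ∈ S) :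
    ((∃ cstar α β : ℝ, 0 < cstar ∧ 0 < α ∧ α ≤ 1 ∧ 1 ≤ β ∧
        ∀ c : ℝ, cstar < c →
          (⨅ x ∈ S, f x) = ⨅ x, f x + ((c * (ψ x ^ α + ψ x ^ β) : ℝ) : EReal)) ↔
      (∃ cstar α β : ℝ, 0 < cstar ∧ 0 < α ∧ α ≤ 1 ∧ 1 ≤ β ∧
        ∀ x, max ((fstar : EReal) - f x) 0 ≤
          ((cstar * (ψ x ^ α + ψ x ^ β) : ℝ) : EReal)))
    ∧
    (∀ cstar α β : ℝ, 0 < cstar → 0 < α → α ≤ 1 → 1 ≤ β →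
      (∀ x, max ((fstar : EReal) - f x) 0 ≤
        ((cstar * (ψ x ^ α + ψ x ^ β) : ℝ) : EReal)) →
      ∀ c : ℝ, cstar < c →
        {x | x ∈ S ∧ f x = (fstar : EReal)} =
          {x | f x + ((c * (ψ x ^ α + ψ x ^ β) : ℝ) : EReal) =
                ⨅ x', f x' + ((c * (ψ x' ^ α + ψ x' ^ β) : ℝ) : EReal)}) := by
  have hr0 : ∀ (α β : ℝ) x, 0 ≤ ψ x ^ α + ψ x ^ β := fun α β x =>
    add_nonneg (rpow_nonneg (hψ0 x) _) (rpow_nonneg (hψ0 x) _)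
  have hrS : ∀ (α β : ℝ), 0 < α → 1 ≤ β → ∀ x ∈ S, ψ x ^ α + ψ x ^ β = 0 := by
    intro α β hα hβ x hx
    rw [(hψS x).2 hx, Real.zero_rpow hα.ne', Real.zero_rpow (by linarith), add_zero]
  have hrz : ∀ (α β : ℝ), 0 < α → ∀ x, ψ x ^ α + ψ x ^ β = 0 → x ∈ S := by
    intro α β hα x hx
    have h1 : ψ x ^ α = 0 := by
      nlinarith [rpow_nonneg (hψ0 x) α, rpow_nonneg (hψ0 x) β]
    exact (hψS x).1 ((Real.rpow_eq_zero (hψ0 x) hα.ne').1 h1)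
  constructor
  · constructor
    · rintro ⟨cstar, α, β, hc0, hα, hα1, hβ, h⟩
      refine ⟨cstar, α, β, hc0, hα, hα1, hβ, fun x => ?_⟩
      refine max_le ?_ (EReal.coe_nonneg.2 (mul_nonneg hc0.le (hr0 α β x)))
      have key : ∀ c : ℝ, cstar < c →
          (fstar : EReal) ≤ f x + ((c * (ψ x ^ α + ψ x ^ β) : ℝ) : EReal) := by
        intro c hc
        calc (fstar : EReal) = _ := hfstar.trans (h c hc)
        _ ≤ _ := iInf_le _ x
      rcases eq_or_ne (f x) ⊤ with h' | h'
      · rw [h', EReal.sub_top]; exact bot_le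
      lift f x to ℝ using ⟨h', hf x⟩ with a ha
      rw [← EReal.coe_sub, EReal.coe_le_coe_iff]
      refine key3 cstar a fstar _ (hr0 α β x) fun c hc => ?_
      have := key c hc
      rw [← EReal.coe_add, EReal.coe_le_coe_iff] at this
      exact this
    · rintro ⟨cstar, α, β, hc0, hα, hα1, hβ, hb⟩
      exact ⟨cstar, α, β, hc0, hα, hα1, hβ, fun c hc =>
        key1 S f hf fstar hfstar _ (hr0 α β) (hrS α β hα hβ) cstar hb c hc.le⟩
  · intro cstar α β hc0 hα hα1 hβ hb c hc
    exact key2 S f hf fstar hfstar _ (hr0 α β) (hrS α β hα hβ) (hrz α β hα) cstar hb c hc
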